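/- arXiv:2501.06258 — 2 statements merged into one kernel-verified Lean document; each statement's English description precedes it below -/
import Mathlib

section
/- Consider the E2TC algorithm on the stochastic contextual bandit with pre-training: during the first T₁+T₂ rounds it selects actions A_t uniformly at random from {1,…,K}; from the data observed in these rounds it computes estimates (w̄, θ̄) with ‖w̄‖ ≤ B_w and ‖θ̄‖ ≤ B_θ, measurable with respect to the first T₁+T₂ contexts, actions, and rewards; for t = T₁+T₂+1,…,T it selects A_t ∈ argmax_{a∈{1,…,K}} w̄ᵀφ_{θ̄}(X_{t,a}). Suppose that with probability at least 1−δ the suboptimality gap satisfies 𝔯(w̄,θ̄) − 𝔯(w*,θ*) < ε. Then the expected pseudo-regret satisfies E[R_{1:T}] ≤ 2B_wB_φTδ + 2B_wB_φ(T₁+T₂) + K(T−T₁−T₂)·√ε. -/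
open MeasureTheory Matrix Real
open scoped ENNReal

/-- Euclidean norm of a vector in `Fin n → ℝ`. -/
noncomputable def vnorm {n : ℕ} (v : Fin n → ℝ) : ℝ := Real.sqrt (v ⬝ᵥ v)

lemma vnorm_nonneg {n : ℕ} (v : Fin n → ℝ) : 0 ≤ vnorm v := Real.sqrt_nonneg _

lemma abs_dot_le {n : ℕ} (v w : Fin n → ℝ) : |v ⬝ᵥ w| ≤ vnorm v * vnorm w := by
  have hvv : (0:ℝ) ≤ v ⬝ᵥ v := Finset.sum_nonneg fun i _ => mul_self_nonneg _
  have h : (v ⬝ᵥ w) ^ 2 ≤ (v ⬝ᵥ v) * (w ⬝ᵥ w) := by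
    have := Finset.sum_mul_sq_le_sq_mul_sq Finset.univ v w
    simpa [dotProduct, sq] using this
  have h2 := Real.abs_le_sqrt h
  rwa [Real.sqrt_mul hvv] at h2

lemma measurable_dot {d d0 : ℕ} {X : Type*} [MeasurableSpace X]
    (φ : (Fin d0 → ℝ) → X → Fin d → ℝ)
    (hφmeas : ∀ θ i, Measurable fun x => φ θ x i) (w : Fin d → ℝ) (θ : Fin d0 → ℝ) :
    Measurable fun x : X => w ⬝ᵥ φ θ x := by
  simpa [dotProduct] using
    Finset.measurable_sum Finset.univ (fun i _ => ((hφmeas θ i).const_mul (w i)))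

lemma map_eval_pi {ι : Type*} [Fintype ι] [DecidableEq ι] {α : ι → Type*}
    [∀ i, MeasurableSpace (α i)] (μ : ∀ i, Measure (α i)) [∀ i, IsProbabilityMeasure (μ i)]
    (j : ι) : (Measure.pi μ).map (Function.eval j) = μ j := by
  ext s hs
  rw [Measure.map_apply (measurable_pi_apply j) hs, Set.eval_preimage]
  rw [Measure.pi_pi]
  rw [Fintype.prod_eq_single j (fun i hij => by simp [Function.update_of_ne hij])]
  simp

lemma lintegral_abs_le_sqrt {α : Type*} [MeasurableSpace α] (μ : Measure α)
    [IsProbabilityMeasure μ] {g : α → ℝ} (hg : Measurable g) (Mb : ℝ) (hb : ∀ x, |g x| ≤ Mb) :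
    ∫⁻ x, ENNReal.ofReal |g x| ∂μ ≤ ENNReal.ofReal (Real.sqrt (∫ x, (g x) ^ 2 ∂μ)) := by
  have hint : Integrable (fun x => (g x) ^ 2) μ := by
    refine ⟨((hg.pow_const 2).aestronglyMeasurable), ?_⟩
    refine HasFiniteIntegral.of_bounded (C := Mb ^ 2) (ae_of_all _ fun x => ?_)
    have hnorm : ‖g x ^ 2‖ = |g x| ^ 2 := by rw [Real.norm_eq_abs, abs_pow]
    rw [hnorm]
    exact pow_le_pow_left₀ (abs_nonneg _) (hb x) 2
  have hconj : Real.HolderConjugate 2 2 := Real.HolderConjugate.two_two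
  have hmeasf : AEMeasurable (fun x => ENNReal.ofReal |g x|) μ :=
    (ENNReal.measurable_ofReal.comp hg.abs).aemeasurable
  have key := ENNReal.lintegral_mul_le_Lp_mul_Lq μ hconj hmeasf aemeasurable_const (g := fun _ => 1)
  simp only [Pi.mul_apply, mul_one, ENNReal.one_rpow, lintegral_const, measure_univ] at key
  have hpt : ∀ x, (ENNReal.ofReal |g x|) ^ (2:ℝ) = ENNReal.ofReal ((g x) ^ 2) := fun x => by
    rw [ENNReal.ofReal_rpow_of_nonneg (abs_nonneg _) (by norm_num)]
    rw [show ((2:ℝ)) = ((2:ℕ):ℝ) by norm_num, Real.rpow_natCast, sq_abs]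
  simp_rw [hpt] at key
  rw [← ofReal_integral_eq_lintegral_ofReal hint (ae_of_all _ fun x => sq_nonneg _)] at key
  calc ∫⁻ x, ENNReal.ofReal |g x| ∂μ
      ≤ (ENNReal.ofReal (∫ x, (g x) ^ 2 ∂μ)) ^ (1/(2:ℝ)) := key
    _ = ENNReal.ofReal ((∫ x, (g x) ^ 2 ∂μ) ^ (1/(2:ℝ))) := by
        rw [ENNReal.ofReal_rpow_of_nonneg (integral_nonneg fun x => sq_nonneg _) (by norm_num)]
    _ = ENNReal.ofReal (Real.sqrt (∫ x, (g x) ^ 2 ∂μ)) := by rw [← Real.sqrt_eq_rpow]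

lemma card_subtype_coe_lt {T n : ℕ} (h : n ≤ T) :
    Fintype.card {t : Fin T // (t:ℕ) < n} = n := by
  have e : {t : Fin T // (t:ℕ) < n} ≃ Fin n :=
    { toFun := fun t => ⟨(t.1 : ℕ), t.2⟩
      invFun := fun i => ⟨Fin.castLE h i, by simpa using i.2⟩
      left_inv := fun t => by ext; simp
      right_inv := fun i => by ext; simp }
  rw [Fintype.card_congr e, Fintype.card_fin]

set_option maxHeartbeats 2000000 in
/-- low risk to low regret for E2TC: if the estimates `(w̄, θ̄)`
computed from the first `T₁ + T₂` exploration rounds satisfy the suboptimality-gap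
bound `𝔯(w̄,θ̄) − 𝔯(w*,θ*) < ε` with probability at least `1 − δ`, and actions in
rounds `t > T₁ + T₂` are chosen greedily for the estimated model, then the expected
pseudo-regret is at most
`2B_wB_φTδ + 2B_wB_φ(T₁+T₂) + K(T−T₁−T₂)√ε`.

Here the probability space is `Ω = (Fin T → (Fin K → X)) × Ω_E`, where the first
component carries the i.i.d. contexts (with per-action marginals `𝒟_X`) and `Ω_E`
carries all exploration randomness (random actions and reward noise); the estimates
depend only on the first `T₁ + T₂` contexts and `Ω_E`.  Since the reward noise `η_t`
does not depend on the chosen action, the pseudo-regret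
`Σ_t (r_{t,A*_t} − r_{t,A_t})` coincides pointwise with
`Σ_t (w*ᵀφ_{θ*}(X_{t,A*_t}) − w*ᵀφ_{θ*}(X_{t,A_t}))`, which is used below, and the
suboptimality gap is expressed as `E_X[(w̄ᵀφ_{θ̄}(X) − w*ᵀφ_{θ*}(X))²]`. -/
theorem e2tc_low_risk_to_low_regret
    {d d0 K T T1 T2 : ℕ} (hK : 0 < K) (hTT : T1 + T2 ≤ T)
    {X : Type*} [MeasurableSpace X]
    (DX : Measure X) [IsProbabilityMeasure DX]
    (DC : Measure (Fin K → X)) [IsProbabilityMeasure DC]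
    (hmarg : ∀ a : Fin K, DC.map (fun c => c a) = DX)
    {ΩE : Type*} [MeasurableSpace ΩE] (PE : Measure ΩE) [IsProbabilityMeasure PE]
    (φ : (Fin d0 → ℝ) → X → Fin d → ℝ)
    (hφmeas : ∀ θ i, Measurable fun x => φ θ x i)
    (Bw Bθ Bφ : ℝ)
    (wstar : Fin d → ℝ) (θstar : Fin d0 → ℝ)
    (hws : vnorm wstar ≤ Bw) (hθs : vnorm θstar ≤ Bθ)
    (hφb : ∀ θ, vnorm θ ≤ Bθ → ∀ x, vnorm (φ θ x) ≤ Bφ)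
    (ε δ : ℝ) (hε : 0 ≤ ε) (hδ : 0 ≤ δ)
    (wbar : (Fin (T1 + T2) → (Fin K → X)) → ΩE → Fin d → ℝ)
    (θbar : (Fin (T1 + T2) → (Fin K → X)) → ΩE → Fin d0 → ℝ)
    (hwbarb : ∀ c e, vnorm (wbar c e) ≤ Bw)
    (hθbarb : ∀ c e, vnorm (θbar c e) ≤ Bθ)
    (A : Fin T → (Fin T → Fin K → X) → ΩE → Fin K)
    (Astar : Fin T → (Fin T → Fin K → X) → Fin K)
    (hAstar : ∀ (t : Fin T) (c : Fin T → Fin K → X) (a : Fin K),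
      wstar ⬝ᵥ φ θstar (c t a) ≤ wstar ⬝ᵥ φ θstar (c t (Astar t c)))
    (hgreedy : ∀ (t : Fin T), T1 + T2 ≤ (t : ℕ) →
      ∀ (c : Fin T → Fin K → X) (e : ΩE) (a : Fin K),
        wbar (fun i => c (Fin.castLE hTT i)) e ⬝ᵥ
            φ (θbar (fun i => c (Fin.castLE hTT i)) e) (c t a) ≤
          wbar (fun i => c (Fin.castLE hTT i)) e ⬝ᵥ
            φ (θbar (fun i => c (Fin.castLE hTT i)) e) (c t (A t c e)))
    (R : (Fin T → Fin K → X) × ΩE → ℝ)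
    (hR : ∀ p, R p = ∑ t : Fin T,
      (wstar ⬝ᵥ φ θstar (p.1 t (Astar t p.1)) -
        wstar ⬝ᵥ φ θstar (p.1 t (A t p.1 p.2))))
    (hRint : Integrable R ((Measure.pi fun _ : Fin T => DC).prod PE))
    (hgap : ((Measure.pi fun _ : Fin T => DC).prod PE)
        {p : (Fin T → Fin K → X) × ΩE |
          (∫ x, (wbar (fun i => p.1 (Fin.castLE hTT i)) p.2 ⬝ᵥ
                φ (θbar (fun i => p.1 (Fin.castLE hTT i)) p.2) x -
              wstar ⬝ᵥ φ θstar x) ^ 2 ∂DX) < ε}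
      ≥ ENNReal.ofReal (1 - δ)) :
    ∫ p, R p ∂((Measure.pi fun _ : Fin T => DC).prod PE) ≤
      2 * Bw * Bφ * T * δ + 2 * Bw * Bφ * (T1 + T2) +
        K * ((T : ℝ) - T1 - T2) * Real.sqrt ε := by
  classical
  have hBw : 0 ≤ Bw := le_trans (vnorm_nonneg wstar) hws
  have hX : Nonempty X := by
    by_contra h
    rw [not_nonempty_iff] at h
    have h1 : DX Set.univ = 1 := measure_univ
    rw [Set.univ_eq_empty_iff.mpr h] at h1
    simp at h1
  obtain ⟨x0⟩ := hX
  have hBφ : 0 ≤ Bφ := le_trans (vnorm_nonneg _) (hφb θstar hθs x0)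
  set M : ℝ := 2 * Bw * Bφ with hMdef
  have hM : 0 ≤ M := by positivity
  have hfb : ∀ (w : Fin d → ℝ) (θ : Fin d0 → ℝ), vnorm w ≤ Bw → vnorm θ ≤ Bθ →
      ∀ x, |w ⬝ᵥ φ θ x| ≤ Bw * Bφ := fun w θ hw hθ x =>
    le_trans (abs_dot_le _ _) (mul_le_mul hw (hφb θ hθ x) (vnorm_nonneg _) hBw)
  set P := (Measure.pi fun _ : Fin T => DC).prod PE with hPdef
  set μh : Measure ({t : Fin T // (t:ℕ) < T1 + T2} → Fin K → X) :=
    Measure.pi fun _ => DC with hμh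
  set μt : Measure ({t : Fin T // ¬ (t:ℕ) < T1 + T2} → Fin K → X) :=
    Measure.pi fun _ => DC with hμt
  set ρ := μh.prod PE with hρ
  set ν := ρ.prod μt with hν
  -- estimate head map and prediction gap function
  set hd : ({t : Fin T // (t:ℕ) < T1 + T2} → Fin K → X) → (Fin (T1 + T2) → Fin K → X) :=
    fun h i => h ⟨Fin.castLE hTT i, by simpa using i.isLt⟩ with hhd
  set Del : ({t : Fin T // (t:ℕ) < T1 + T2} → Fin K → X) → ΩE → X → ℝ :=
    fun h e x => wbar (hd h) e ⬝ᵥ φ (θbar (hd h) e) x - wstar ⬝ᵥ φ θstar x with hDel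
  set Gap : (({t : Fin T // (t:ℕ) < T1 + T2} → Fin K → X) × ΩE) → ℝ :=
    fun ω => ∫ x, (Del ω.1 ω.2 x) ^ 2 ∂DX with hGap
  set F : (Fin T → Fin K → X) × ΩE → ℝ := fun p =>
    (T1 + T2 : ℝ) * M + ∑ t : Fin T, (if (t:ℕ) < T1 + T2 then 0 else
      min M (∑ a : Fin K, |Del (fun i => p.1 i.1) p.2 (p.1 t a)|)) with hF
  have hDelb : ∀ h e x, |Del h e x| ≤ M := by
    intro h e x
    simp only [hDel]
    calc |wbar (hd h) e ⬝ᵥ φ (θbar (hd h) e) x - wstar ⬝ᵥ φ θstar x|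
        ≤ |wbar (hd h) e ⬝ᵥ φ (θbar (hd h) e) x| + |wstar ⬝ᵥ φ θstar x| := abs_sub _ _
      _ ≤ Bw * Bφ + Bw * Bφ :=
          add_le_add (hfb _ _ (hwbarb _ _) (hθbarb _ _) x) (hfb _ _ hws hθs x)
      _ = M := by rw [hMdef]; ring
  have hDelm : ∀ h e, Measurable (Del h e) := fun h e =>
    (measurable_dot φ hφmeas _ _).sub (measurable_dot φ hφmeas _ _)
  -- pointwise regret bound
  have hRF : ∀ p, R p ≤ F p := by
    intro p
    rw [hR]
    have hterm : ∀ t : Fin T,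
        wstar ⬝ᵥ φ θstar (p.1 t (Astar t p.1)) - wstar ⬝ᵥ φ θstar (p.1 t (A t p.1 p.2))
          ≤ (if (t:ℕ) < T1 + T2 then M else
              min M (∑ a : Fin K, |Del (fun i => p.1 i.1) p.2 (p.1 t a)|)) := by
      intro t
      have hub : wstar ⬝ᵥ φ θstar (p.1 t (Astar t p.1)) -
          wstar ⬝ᵥ φ θstar (p.1 t (A t p.1 p.2)) ≤ M := by
        have h1 := hfb wstar θstar hws hθs (p.1 t (Astar t p.1))
        have h2 := hfb wstar θstar hws hθs (p.1 t (A t p.1 p.2))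
        rw [hMdef]
        have h3 := le_abs_self (wstar ⬝ᵥ φ θstar (p.1 t (Astar t p.1)))
        have h4 := neg_abs_le (wstar ⬝ᵥ φ θstar (p.1 t (A t p.1 p.2)))
        linarith
      by_cases hlt : (t:ℕ) < T1 + T2
      · rw [if_pos hlt]; exact hub
      · rw [if_neg hlt]
        refine le_min hub ?_
        by_cases heq : Astar t p.1 = A t p.1 p.2
        · rw [heq, sub_self]
          exact Finset.sum_nonneg fun a _ => abs_nonneg _
        · have hle := not_lt.mp hlt
          have hgr := hgreedy t hle p.1 p.2 (Astar t p.1)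
          have hDeq : ∀ x, Del (fun i => p.1 i.1) p.2 x =
              wbar (fun i => p.1 (Fin.castLE hTT i)) p.2 ⬝ᵥ
                φ (θbar (fun i => p.1 (Fin.castLE hTT i)) p.2) x -
              wstar ⬝ᵥ φ θstar x := fun x => rfl
          refine le_trans ?_ (Finset.sum_le_sum_of_subset_of_nonneg
            (Finset.subset_univ {Astar t p.1, A t p.1 p.2}) fun a _ _ => abs_nonneg _)
          rw [Finset.sum_pair heq, hDeq, hDeq]
          have hx1 := neg_abs_le (wbar (fun i => p.1 (Fin.castLE hTT i)) p.2 ⬝ᵥ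
              φ (θbar (fun i => p.1 (Fin.castLE hTT i)) p.2) (p.1 t (Astar t p.1)) -
              wstar ⬝ᵥ φ θstar (p.1 t (Astar t p.1)))
          have hx2 := le_abs_self (wbar (fun i => p.1 (Fin.castLE hTT i)) p.2 ⬝ᵥ
              φ (θbar (fun i => p.1 (Fin.castLE hTT i)) p.2) (p.1 t (A t p.1 p.2)) -
              wstar ⬝ᵥ φ θstar (p.1 t (A t p.1 p.2)))
          linarith
    calc ∑ t : Fin T, (wstar ⬝ᵥ φ θstar (p.1 t (Astar t p.1)) -
            wstar ⬝ᵥ φ θstar (p.1 t (A t p.1 p.2)))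
        ≤ ∑ t : Fin T, (if (t:ℕ) < T1 + T2 then M else
            min M (∑ a : Fin K, |Del (fun i => p.1 i.1) p.2 (p.1 t a)|)) :=
          Finset.sum_le_sum fun t _ => hterm t
      _ = (∑ t : Fin T, if (t:ℕ) < T1 + T2 then M else 0) +
          ∑ t : Fin T, (if (t:ℕ) < T1 + T2 then 0 else
            min M (∑ a : Fin K, |Del (fun i => p.1 i.1) p.2 (p.1 t a)|)) := by
          rw [← Finset.sum_add_distrib]
          apply Finset.sum_congr rfl
          intro t _
          by_cases hlt : (t:ℕ) < T1 + T2 <;> simp [hlt]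
      _ ≤ (T1 + T2 : ℝ) * M +
          ∑ t : Fin T, (if (t:ℕ) < T1 + T2 then 0 else
            min M (∑ a : Fin K, |Del (fun i => p.1 i.1) p.2 (p.1 t a)|)) := by
          apply add_le_add_left
          rw [← Finset.sum_filter, Finset.sum_const, nsmul_eq_mul]
          have hcard : (Finset.univ.filter (fun t : Fin T => (t:ℕ) < T1 + T2)).card = T1 + T2 := by
            rw [← Fintype.card_subtype]
            exact card_subtype_coe_lt hTT
          rw [hcard]
          push_cast
          exact le_rfl
      _ = F p := by simp only [hF]
  -- the measurable equivalence splitting exploration and exploitation contexts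
  set Θ : ((Fin T → Fin K → X) × ΩE) ≃ᵐ
      ((({t : Fin T // (t:ℕ) < T1 + T2} → Fin K → X) × ΩE) ×
        ({t : Fin T // ¬ (t:ℕ) < T1 + T2} → Fin K → X)) :=
    ((MeasurableEquiv.piEquivPiSubtypeProd (fun _ : Fin T => (Fin K → X))
        (fun t => (t:ℕ) < T1 + T2)).prodCongr (MeasurableEquiv.refl ΩE)).trans
      (MeasurableEquiv.prodAssoc.trans
        (((MeasurableEquiv.refl _).prodCongr MeasurableEquiv.prodComm).trans
          MeasurableEquiv.prodAssoc.symm)) with hΘdef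
  have hΘ : MeasurePreserving (⇑Θ) P ν := by
    have h1 : MeasurePreserving (Prod.map (⇑(MeasurableEquiv.piEquivPiSubtypeProd
        (fun _ : Fin T => (Fin K → X)) (fun t => (t:ℕ) < T1 + T2))) id) P
        ((μh.prod μt).prod PE) :=
      (measurePreserving_piEquivPiSubtypeProd (fun _ : Fin T => DC)
        (fun t : Fin T => (t:ℕ) < T1 + T2)).prod (MeasurePreserving.id PE)
    have h2 := measurePreserving_prodAssoc μh μt PE
    have h3 : MeasurePreserving (Prod.map (id : _ → _) (Prod.swap :
        (({t : Fin T // ¬ (t:ℕ) < T1 + T2} → Fin K → X) × ΩE) → _))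
        (μh.prod (μt.prod PE)) (μh.prod (PE.prod μt)) :=
      (MeasurePreserving.id μh).prod Measure.measurePreserving_swap
    have h4 : MeasurePreserving (⇑(MeasurableEquiv.prodAssoc.symm :
        _ ≃ᵐ ((({t : Fin T // (t:ℕ) < T1 + T2} → Fin K → X) × ΩE) ×
          ({t : Fin T // ¬ (t:ℕ) < T1 + T2} → Fin K → X))))
        (μh.prod (PE.prod μt)) ν :=
      (measurePreserving_prodAssoc μh PE μt).symm MeasurableEquiv.prodAssoc
    exact ((h4.comp h3).comp h2).comp h1
  have hΘsymm : MeasurePreserving (⇑Θ.symm) ν P := hΘ.symm Θ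
  have hsymm_eval : ∀ (h : {t : Fin T // (t:ℕ) < T1 + T2} → Fin K → X) (e : ΩE)
      (y : {t : Fin T // ¬ (t:ℕ) < T1 + T2} → Fin K → X),
      Θ.symm ((h, e), y) =
        (fun t : Fin T => if ht : (t:ℕ) < T1 + T2 then h ⟨t, ht⟩ else y ⟨t, ht⟩, e) := by
    intro h e y; rfl
  -- integrability bookkeeping
  have hRmeas := hRint.aestronglyMeasurable
  set R₀ := hRmeas.mk R with hR₀def
  have hR₀m : Measurable R₀ := hRmeas.stronglyMeasurable_mk.measurable
  have hRae : R =ᵐ[P] R₀ := hRmeas.ae_eq_mk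
  have hRnn : 0 ≤ᵐ[P] R := ae_of_all _ (fun p => by
    rw [hR]
    exact Finset.sum_nonneg fun t _ => sub_nonneg.2 (hAstar t p.1 (A t p.1 p.2)))
  have hint : ∫ p, R p ∂P = (∫⁻ p, ENNReal.ofReal (R p) ∂P).toReal :=
    integral_eq_lintegral_of_nonneg_ae hRnn hRmeas
  have hlcong : ∫⁻ p, ENNReal.ofReal (R p) ∂P = ∫⁻ p, ENNReal.ofReal (R₀ p) ∂P :=
    lintegral_congr_ae (hRae.mono fun p hp => by simp only [hp])
  set k : ((({t : Fin T // (t:ℕ) < T1 + T2} → Fin K → X) × ΩE) ×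
      ({t : Fin T // ¬ (t:ℕ) < T1 + T2} → Fin K → X)) → ℝ≥0∞ :=
    fun q => ENNReal.ofReal (R₀ (Θ.symm q)) with hk
  have hkm : Measurable k := ENNReal.measurable_ofReal.comp (hR₀m.comp Θ.symm.measurable)
  have htrans : ∫⁻ p, ENNReal.ofReal (R₀ p) ∂P = ∫⁻ q, k q ∂ν := by
    rw [← hΘ.map_eq, lintegral_map_equiv]
    simp [hk]
  have htonelli : ∫⁻ q, k q ∂ν = ∫⁻ ω, ∫⁻ y, k (ω, y) ∂μt ∂ρ :=
    lintegral_prod k hkm.aemeasurable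
  set Φ : (({t : Fin T // (t:ℕ) < T1 + T2} → Fin K → X) × ΩE) → ℝ≥0∞ :=
    fun ω => ∫⁻ y, k (ω, y) ∂μt with hΦ
  have hΦm : Measurable Φ := hkm.lintegral_prod_right'
  set N : ℕ := T - (T1 + T2) with hN
  set Ψ : (({t : Fin T // (t:ℕ) < T1 + T2} → Fin K → X) × ΩE) → ℝ≥0∞ := fun ω =>
    ENNReal.ofReal ((T1 + T2 : ℝ) * M) +
      (N : ℝ≥0∞) * min (ENNReal.ofReal M)
        ((K : ℝ≥0∞) * ENNReal.ofReal (Real.sqrt (Gap ω))) with hΨ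
  have hae1 : ∀ᵐ q ∂ν, k q ≤ ENNReal.ofReal (F (Θ.symm q)) := by
    have h0 : ∀ᵐ p ∂P, R₀ p ≤ F p := by
      filter_upwards [hRae] with p hp
      rw [← hp]; exact hRF p
    filter_upwards [hΘsymm.quasiMeasurePreserving.ae h0] with q hq
    exact ENNReal.ofReal_le_ofReal hq
  have hinner : ∀ ω, (∫⁻ y, ENNReal.ofReal (F (Θ.symm (ω, y))) ∂μt) ≤ Ψ ω := by
    rintro ⟨h, e⟩
    have hFeq : ∀ y : ({t : Fin T // ¬ (t:ℕ) < T1 + T2} → Fin K → X),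
        F (Θ.symm ((h, e), y)) = (T1 + T2 : ℝ) * M +
          ∑ t : Fin T, (if ht : (t:ℕ) < T1 + T2 then 0 else
            min M (∑ a : Fin K, |Del h e (y ⟨t, ht⟩ a)|)) := by
      intro y
      rw [hsymm_eval]
      simp only [hF]
      congr 1
      apply Finset.sum_congr rfl
      intro t _
      by_cases ht : (t:ℕ) < T1 + T2
      · simp [ht]
      · rw [if_neg ht, dif_neg ht]
        have h1 : (fun i : {s : Fin T // (s:ℕ) < T1 + T2} =>
            (fun s : Fin T => if hs : (s:ℕ) < T1 + T2 then h ⟨s, hs⟩ else y ⟨s, hs⟩) i.1) = h := by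
          funext i
          exact dif_pos i.2
        rw [h1, dif_neg ht]
    have hgmin : Measurable (fun z : Fin K → X =>
        ENNReal.ofReal (min M (∑ a : Fin K, |Del h e (z a)|))) :=
      ENNReal.measurable_ofReal.comp (measurable_const.min
        (Finset.measurable_sum _ fun a _ => ((hDelm h e).comp (measurable_pi_apply a)).abs))
    have hmeas_term : ∀ t : Fin T, Measurable (fun y : ({t : Fin T // ¬ (t:ℕ) < T1 + T2} → Fin K → X) =>
        ENNReal.ofReal (if ht : (t:ℕ) < T1 + T2 then 0 else
          min M (∑ a : Fin K, |Del h e (y ⟨t, ht⟩ a)|))) := by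
      intro t
      by_cases ht : (t:ℕ) < T1 + T2
      · simp only [dif_pos ht]; exact measurable_const
      · simp only [dif_neg ht]
        exact hgmin.comp (measurable_pi_apply (⟨t, ht⟩ : {s : Fin T // ¬ (s:ℕ) < T1 + T2}))
    have hJt : ∀ (t : Fin T) (ht : ¬ (t:ℕ) < T1 + T2),
        (∫⁻ y, ENNReal.ofReal (min M (∑ a : Fin K, |Del h e (y ⟨t, ht⟩ a)|)) ∂μt)
          = ∫⁻ z, ENNReal.ofReal (min M (∑ a : Fin K, |Del h e (z a)|)) ∂DC := by
      intro t ht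
      have hmap : μt.map (Function.eval (⟨t, ht⟩ : {s : Fin T // ¬ (s:ℕ) < T1 + T2})) = DC :=
        map_eval_pi _ _
      rw [← hmap]
      exact (lintegral_map hgmin (measurable_pi_apply _)).symm
    have hI : (∫⁻ x, ENNReal.ofReal |Del h e x| ∂DX) ≤
        ENNReal.ofReal (Real.sqrt (Gap (h, e))) := by
      have := lintegral_abs_le_sqrt DX (hDelm h e) M (hDelb h e)
      simpa [hGap] using this
    have hJ2 : (∫⁻ z, ENNReal.ofReal (min M (∑ a : Fin K, |Del h e (z a)|)) ∂DC) ≤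
        (K : ℝ≥0∞) * ENNReal.ofReal (Real.sqrt (Gap (h, e))) := by
      calc (∫⁻ z, ENNReal.ofReal (min M (∑ a : Fin K, |Del h e (z a)|)) ∂DC)
          ≤ ∫⁻ z, ENNReal.ofReal (∑ a : Fin K, |Del h e (z a)|) ∂DC :=
            lintegral_mono fun z => ENNReal.ofReal_le_ofReal (min_le_right _ _)
        _ = ∫⁻ z, ∑ a : Fin K, ENNReal.ofReal |Del h e (z a)| ∂DC :=
            lintegral_congr fun z => ENNReal.ofReal_sum_of_nonneg (fun a _ => abs_nonneg _)
        _ = ∑ a : Fin K, ∫⁻ z, ENNReal.ofReal |Del h e (z a)| ∂DC :=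
            lintegral_finset_sum _ (fun a _ =>
              ENNReal.measurable_ofReal.comp ((hDelm h e).comp (measurable_pi_apply a)).abs)
        _ = ∑ _a : Fin K, ∫⁻ x, ENNReal.ofReal |Del h e x| ∂DX := by
            apply Finset.sum_congr rfl
            intro a _
            rw [← hmarg a]
            exact (lintegral_map (ENNReal.measurable_ofReal.comp (hDelm h e).abs)
              (measurable_pi_apply a)).symm
        _ = (K : ℝ≥0∞) * ∫⁻ x, ENNReal.ofReal |Del h e x| ∂DX := by
            rw [Finset.sum_const, nsmul_eq_mul, Finset.card_univ, Fintype.card_fin]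
        _ ≤ (K : ℝ≥0∞) * ENNReal.ofReal (Real.sqrt (Gap (h, e))) := mul_le_mul_right hI _
    have hJ1 : (∫⁻ z, ENNReal.ofReal (min M (∑ a : Fin K, |Del h e (z a)|)) ∂DC) ≤
        ENNReal.ofReal M := by
      calc (∫⁻ z, ENNReal.ofReal (min M (∑ a : Fin K, |Del h e (z a)|)) ∂DC)
          ≤ ∫⁻ _z, ENNReal.ofReal M ∂DC :=
            lintegral_mono fun z => ENNReal.ofReal_le_ofReal (min_le_left _ _)
        _ = ENNReal.ofReal M := by rw [lintegral_const, measure_univ, mul_one]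
    calc (∫⁻ y, ENNReal.ofReal (F (Θ.symm ((h, e), y))) ∂μt)
        = ∫⁻ y, (ENNReal.ofReal ((T1 + T2 : ℝ) * M) +
            ∑ t : Fin T, ENNReal.ofReal (if ht : (t:ℕ) < T1 + T2 then 0 else
              min M (∑ a : Fin K, |Del h e (y ⟨t, ht⟩ a)|))) ∂μt := by
          apply lintegral_congr
          intro y
          rw [hFeq y, ENNReal.ofReal_add (by positivity) (Finset.sum_nonneg fun t _ => ?_),
            ENNReal.ofReal_sum_of_nonneg (fun t _ => ?_)]
          · by_cases ht : (t:ℕ) < T1 + T2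
            · simp [ht]
            · rw [dif_neg ht]
              exact le_min hM (Finset.sum_nonneg fun a _ => abs_nonneg _)
          · by_cases ht : (t:ℕ) < T1 + T2
            · simp [ht]
            · rw [dif_neg ht]
              exact le_min hM (Finset.sum_nonneg fun a _ => abs_nonneg _)
      _ = ENNReal.ofReal ((T1 + T2 : ℝ) * M) +
          ∑ t : Fin T, ∫⁻ y, ENNReal.ofReal (if ht : (t:ℕ) < T1 + T2 then 0 else
            min M (∑ a : Fin K, |Del h e (y ⟨t, ht⟩ a)|)) ∂μt := by
          rw [lintegral_add_left measurable_const, lintegral_const, measure_univ, mul_one,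
            lintegral_finset_sum _ (fun t _ => hmeas_term t)]
      _ = ENNReal.ofReal ((T1 + T2 : ℝ) * M) +
          ∑ t : Fin T, (if (t:ℕ) < T1 + T2 then 0 else
            ∫⁻ z, ENNReal.ofReal (min M (∑ a : Fin K, |Del h e (z a)|)) ∂DC) := by
          congr 1
          apply Finset.sum_congr rfl
          intro t _
          by_cases ht : (t:ℕ) < T1 + T2
          · simp [ht]
          · rw [if_neg ht]
            simp only [dif_neg ht]
            exact hJt t ht
      _ = ENNReal.ofReal ((T1 + T2 : ℝ) * M) + (N : ℝ≥0∞) *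
            ∫⁻ z, ENNReal.ofReal (min M (∑ a : Fin K, |Del h e (z a)|)) ∂DC := by
          congr 1
          have hcard2 : (Finset.univ.filter (fun t : Fin T => ¬ (t:ℕ) < T1 + T2)).card = N := by
            rw [hN, ← Fintype.card_subtype, Fintype.card_subtype_compl, Fintype.card_fin,
              card_subtype_coe_lt hTT]
          rw [Finset.sum_ite, Finset.sum_const, Finset.sum_const, smul_zero, zero_add,
            hcard2, nsmul_eq_mul]
      _ ≤ Ψ (h, e) := by
          exact add_le_add_right (mul_le_mul_right (le_min hJ1 hJ2) _) _
  have hΦΨ : ∀ᵐ ω ∂ρ, Φ ω ≤ Ψ ω := by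
    filter_upwards [Measure.ae_ae_of_ae_prod hae1] with ω hω
    exact le_trans (lintegral_mono_ae hω) (hinner ω)
  -- level-set argument
  set cE : ℝ≥0∞ := ENNReal.ofReal ((T1 + T2 : ℝ) * M) +
    (N : ℝ≥0∞) * ((K : ℝ≥0∞) * ENNReal.ofReal (Real.sqrt ε)) with hcE
  set Eset : Set _ := {ω | cE < Φ ω} with hEset
  have hEmeas : MeasurableSet Eset := measurableSet_lt measurable_const hΦm
  have hEδ : ρ Eset ≤ ENNReal.ofReal δ := by
    have hgoodbound : ENNReal.ofReal (1 - δ) ≤ ρ {ω | Gap ω < ε} := by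
      set fω : ((Fin T → Fin K → X) × ΩE) →
          ((({t : Fin T // (t:ℕ) < T1 + T2} → Fin K → X)) × ΩE) :=
        fun p => (fun i => p.1 i.1, p.2) with hfω
      have hfm : Measurable fω :=
        (measurable_pi_lambda _ fun i => (measurable_pi_apply i.1).comp measurable_fst).prodMk
          measurable_snd
      have hfmap : P.map fω = ρ := by
        have h1 : fω = Prod.fst ∘ ⇑Θ := rfl
        rw [h1, ← Measure.map_map measurable_fst Θ.measurable, hΘ.map_eq, hν,
          Measure.map_fst_prod, measure_univ, one_smul]
      have hpre : {p : (Fin T → Fin K → X) × ΩE |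
          (∫ x, (wbar (fun i => p.1 (Fin.castLE hTT i)) p.2 ⬝ᵥ
                φ (θbar (fun i => p.1 (Fin.castLE hTT i)) p.2) x -
              wstar ⬝ᵥ φ θstar x) ^ 2 ∂DX) < ε} = fω ⁻¹' {ω | Gap ω < ε} := rfl
      calc ENNReal.ofReal (1 - δ) ≤ P {p : (Fin T → Fin K → X) × ΩE |
          (∫ x, (wbar (fun i => p.1 (Fin.castLE hTT i)) p.2 ⬝ᵥ
                φ (θbar (fun i => p.1 (Fin.castLE hTT i)) p.2) x -
              wstar ⬝ᵥ φ θstar x) ^ 2 ∂DX) < ε} := hgap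
        _ = P (fω ⁻¹' {ω | Gap ω < ε}) := by rw [hpre]
        _ ≤ (P.map fω) {ω | Gap ω < ε} := Measure.le_map_apply hfm.aemeasurable _
        _ = ρ {ω | Gap ω < ε} := by rw [hfmap]
    have hone : ENNReal.ofReal (1 - δ) ≤ ρ Esetᶜ := by
      have hsubset : {ω | Gap ω < ε} ⊆ Esetᶜ ∪ {ω | ¬ (Φ ω ≤ Ψ ω)} := by
        intro ω hω
        by_cases hp : Φ ω ≤ Ψ ω
        · left
          simp only [hEset, Set.mem_compl_iff, Set.mem_setOf_eq, not_lt]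
          calc Φ ω ≤ Ψ ω := hp
            _ ≤ cE := by
              apply add_le_add_right
              apply mul_le_mul_right
              refine le_trans (min_le_right _ _) ?_
              exact mul_le_mul_right
                (ENNReal.ofReal_le_ofReal (Real.sqrt_le_sqrt (le_of_lt hω))) _
        · right; exact hp
      have hnull : ρ {ω | ¬ (Φ ω ≤ Ψ ω)} = 0 := ae_iff.mp hΦΨ
      calc ENNReal.ofReal (1 - δ) ≤ ρ {ω | Gap ω < ε} := hgoodbound
        _ ≤ ρ (Esetᶜ ∪ {ω | ¬ (Φ ω ≤ Ψ ω)}) := measure_mono hsubset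
        _ ≤ ρ Esetᶜ + ρ {ω | ¬ (Φ ω ≤ Ψ ω)} := measure_union_le _ _
        _ = ρ Esetᶜ := by rw [hnull, add_zero]
    have h1 : ρ Eset + ENNReal.ofReal (1 - δ) ≤ 1 := by
      calc ρ Eset + ENNReal.ofReal (1 - δ) ≤ ρ Eset + ρ Esetᶜ := add_le_add_right hone _
        _ = 1 := by rw [measure_add_measure_compl hEmeas, measure_univ]
    by_cases hδ1 : δ ≤ 1
    · have h2 : ENNReal.ofReal (1 - δ) = 1 - ENNReal.ofReal δ := by
        rw [ENNReal.ofReal_sub 1 hδ, ENNReal.ofReal_one]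
      have h3 : ρ Eset ≤ 1 - ENNReal.ofReal (1 - δ) :=
        ENNReal.le_sub_of_add_le_right ENNReal.ofReal_ne_top h1
      rwa [h2, ENNReal.sub_sub_cancel ENNReal.one_ne_top
        (ENNReal.ofReal_le_one.mpr hδ1)] at h3
    · push_neg at hδ1
      calc ρ Eset ≤ 1 := prob_le_one
        _ ≤ ENNReal.ofReal δ := ENNReal.one_le_ofReal.mpr hδ1.le
  have hΦbound : ∀ᵐ ω ∂ρ, Φ ω ≤ cE + Eset.indicator (fun _ => (N : ℝ≥0∞) * ENNReal.ofReal M) ω := by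
    filter_upwards [hΦΨ] with ω hω
    by_cases hmem : ω ∈ Eset
    · rw [Set.indicator_of_mem hmem]
      calc Φ ω ≤ Ψ ω := hω
        _ ≤ ENNReal.ofReal ((T1 + T2 : ℝ) * M) + (N : ℝ≥0∞) * ENNReal.ofReal M := by
            exact add_le_add_right (mul_le_mul_right (min_le_left _ _) _) _
        _ ≤ cE + (N : ℝ≥0∞) * ENNReal.ofReal M := by
            exact add_le_add_left (by rw [hcE]; exact le_self_add) _
    · rw [Set.indicator_of_notMem hmem]
      rw [Set.mem_setOf_eq, not_lt] at hmem
      simpa using hmem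
  have hmain : ∫⁻ ω, Φ ω ∂ρ ≤ cE + (N : ℝ≥0∞) * ENNReal.ofReal M * ENNReal.ofReal δ := by
    calc ∫⁻ ω, Φ ω ∂ρ
        ≤ ∫⁻ ω, (cE + Eset.indicator (fun _ => (N : ℝ≥0∞) * ENNReal.ofReal M) ω) ∂ρ :=
          lintegral_mono_ae hΦbound
      _ = cE + (N : ℝ≥0∞) * ENNReal.ofReal M * ρ Eset := by
          rw [lintegral_add_left measurable_const, lintegral_const, measure_univ, mul_one,
            lintegral_indicator_const hEmeas]
      _ ≤ cE + (N : ℝ≥0∞) * ENNReal.ofReal M * ENNReal.ofReal δ := by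
          exact add_le_add_right (mul_le_mul_right hEδ _) _
  -- final assembly
  have hNr : ((N : ℕ) : ℝ) = (T : ℝ) - T1 - T2 := by
    rw [hN, Nat.cast_sub hTT]
    push_cast
    ring
  have htn : (0 : ℝ) ≤ (T : ℝ) - T1 - T2 := by rw [← hNr]; positivity
  have hsqε : (0 : ℝ) ≤ Real.sqrt ε := Real.sqrt_nonneg _
  have htarget_nonneg : (0 : ℝ) ≤ 2 * Bw * Bφ * T * δ + 2 * Bw * Bφ * (T1 + T2) +
      K * ((T : ℝ) - T1 - T2) * Real.sqrt ε := by
    have h1 : (0:ℝ) ≤ 2 * Bw * Bφ * T * δ := by positivity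
    have h2 : (0:ℝ) ≤ 2 * Bw * Bφ * (T1 + T2) := by positivity
    have h3 : (0:ℝ) ≤ K * ((T : ℝ) - T1 - T2) * Real.sqrt ε :=
      mul_nonneg (mul_nonneg (by positivity) htn) hsqε
    linarith
  have hfinal : ∫⁻ ω, Φ ω ∂ρ ≤ ENNReal.ofReal (2 * Bw * Bφ * T * δ +
      2 * Bw * Bφ * (T1 + T2) + K * ((T : ℝ) - T1 - T2) * Real.sqrt ε) := by
    refine hmain.trans ?_
    have hcollapse : cE + (N : ℝ≥0∞) * ENNReal.ofReal M * ENNReal.ofReal δ =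
        ENNReal.ofReal ((T1 + T2 : ℝ) * M + (N : ℝ) * ((K : ℝ) * Real.sqrt ε) +
          (N : ℝ) * M * δ) := by
      have e1 : (N : ℝ≥0∞) * ((K : ℝ≥0∞) * ENNReal.ofReal (Real.sqrt ε)) =
          ENNReal.ofReal ((N : ℝ) * ((K : ℝ) * Real.sqrt ε)) := by
        rw [ENNReal.ofReal_mul (Nat.cast_nonneg N), ENNReal.ofReal_mul (Nat.cast_nonneg K),
          ENNReal.ofReal_natCast, ENNReal.ofReal_natCast]
      have e2 : (N : ℝ≥0∞) * ENNReal.ofReal M * ENNReal.ofReal δ =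
          ENNReal.ofReal ((N : ℝ) * M * δ) := by
        rw [ENNReal.ofReal_mul (mul_nonneg (Nat.cast_nonneg N) hM),
          ENNReal.ofReal_mul (Nat.cast_nonneg N), ENNReal.ofReal_natCast]
      rw [hcE, e1, e2,
        ← ENNReal.ofReal_add (mul_nonneg (by positivity) hM)
          (mul_nonneg (Nat.cast_nonneg N) (mul_nonneg (Nat.cast_nonneg K) hsqε)),
        ← ENNReal.ofReal_add
          (add_nonneg (mul_nonneg (by positivity) hM)
            (mul_nonneg (Nat.cast_nonneg N) (mul_nonneg (Nat.cast_nonneg K) hsqε)))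
          (mul_nonneg (mul_nonneg (Nat.cast_nonneg N) hM) hδ)]
    rw [hcollapse]
    apply ENNReal.ofReal_le_ofReal
    have hNT : ((N : ℕ) : ℝ) ≤ (T : ℝ) := by
      rw [hNr]
      have : (0:ℝ) ≤ (T1 : ℝ) + (T2 : ℝ) := by positivity
      linarith
    rw [hMdef, hNr]
    have hMδ : (0:ℝ) ≤ 2 * Bw * Bφ * δ := by positivity
    have hT12 : (0:ℝ) ≤ (T1 : ℝ) + (T2 : ℝ) := by positivity
    nlinarith [mul_nonneg hMδ hT12]
  rw [hint, hlcong, htrans, htonelli]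
  exact ENNReal.toReal_le_of_le_ofReal htarget_nonneg hfinal
end

section
/- For any points X₁,…,X_{T₁} ∈ X and any λ > 0, the following deterministic inequality holds: ‖(1/T₁) Σ_{t=1}^{T₁} φ_{θ₀}(X_t) Δφ(X_t)ᵀ w*‖_{Σ̂_λ⁻¹} ≤ √d · ‖w*‖_{Σ̂_δ}, where Σ̂_λ = (1/T₁)Σ_{t=1}^{T₁} φ_{θ₀}(X_t)φ_{θ₀}(X_t)ᵀ + λI and Σ̂_δ = (1/T₁)Σ_{t=1}^{T₁} Δφ(X_t)Δφ(X_t)ᵀ. -/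
open Matrix Finset

/-- Matrix-weighted (semi-)norm `‖v‖_M = √(vᵀ M v)`. -/
noncomputable def mnorm {n : ℕ} (M : Matrix (Fin n) (Fin n) ℝ) (v : Fin n → ℝ) : ℝ :=
  Real.sqrt (v ⬝ᵥ (M *ᵥ v))

lemma vecMulVec_mulVec' {d : ℕ} (a b x : Fin d → ℝ) :
    vecMulVec a b *ᵥ x = (b ⬝ᵥ x) • a := by
  ext i
  simp [vecMulVec_apply, mulVec, dotProduct, Finset.mul_sum, mul_comm, mul_assoc, mul_left_comm]

lemma sum_mulVec' {d n : ℕ} (N : Fin n → Matrix (Fin d) (Fin d) ℝ) (x : Fin d → ℝ) :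
    (∑ t, N t) *ᵥ x = ∑ t, N t *ᵥ x := by
  ext i
  simp only [mulVec, dotProduct, Finset.sum_apply, Matrix.sum_apply, Finset.sum_mul]
  rw [Finset.sum_comm]


lemma dotProduct_sum' {d n : ℕ} (x : Fin d → ℝ) (f : Fin n → Fin d → ℝ) :
    x ⬝ᵥ (∑ t, f t) = ∑ t, x ⬝ᵥ f t := by
  simp only [dotProduct, Finset.sum_apply, Finset.mul_sum]
  exact Finset.sum_comm

lemma sum_dotProduct' {d n : ℕ} (x : Fin d → ℝ) (f : Fin n → Fin d → ℝ) :
    (∑ t, f t) ⬝ᵥ x = ∑ t, f t ⬝ᵥ x := by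
  simp only [dotProduct, Finset.sum_apply, Finset.sum_mul]
  exact Finset.sum_comm

lemma dotProduct_self_nonneg' {d : ℕ} (x : Fin d → ℝ) : 0 ≤ x ⬝ᵥ x :=
  Finset.sum_nonneg fun i _ => mul_self_nonneg _

lemma key_lemma {d n : ℕ} (ψ : Fin n → Fin d → ℝ) (a : Fin n → ℝ) (c lam : ℝ)
    (hc : 0 ≤ c) (hlam : 0 < lam) :
    mnorm ((c • ∑ t, vecMulVec (ψ t) (ψ t)) + lam • (1 : Matrix (Fin d) (Fin d) ℝ))⁻¹
      (c • ∑ t, a t • ψ t) ≤ Real.sqrt (c * ∑ t, (a t)^2) := by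
  set A : Matrix (Fin d) (Fin d) ℝ := c • ∑ t, vecMulVec (ψ t) (ψ t) with hAdef
  set M : Matrix (Fin d) (Fin d) ℝ := A + lam • 1 with hMdef
  set v : Fin d → ℝ := c • ∑ t, a t • ψ t with hvdef
  -- quadratic form of A
  have hquadA : ∀ x : Fin d → ℝ, x ⬝ᵥ (A *ᵥ x) = c * ∑ t, (ψ t ⬝ᵥ x)^2 := by
    intro x
    rw [hAdef, smul_mulVec, sum_mulVec']
    simp only [vecMulVec_mulVec']
    rw [dotProduct_smul, dotProduct_sum']
    simp only [dotProduct_smul]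
    congr 1
    refine Finset.sum_congr rfl fun t _ => ?_
    rw [dotProduct_comm x (ψ t), sq]
    rfl
  have hquadM : ∀ x : Fin d → ℝ, x ⬝ᵥ (M *ᵥ x) = c * (∑ t, (ψ t ⬝ᵥ x)^2) + lam * (x ⬝ᵥ x) := by
    intro x
    rw [hMdef, add_mulVec, dotProduct_add, hquadA, smul_mulVec, one_mulVec,
      dotProduct_smul]
    rfl
  -- M is positive definite
  have hMpd : M.PosDef := by
    refine posDef_iff_dotProduct_mulVec.mpr ⟨?_, ?_⟩
    · unfold Matrix.IsHermitian
      rw [conjTranspose_eq_transpose_of_trivial, hMdef, transpose_add, transpose_smul,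
        transpose_smul, transpose_one]
      congr 1
      rw [transpose_sum]
      congr 1
      refine Finset.sum_congr rfl fun t _ => ?_
      ext i j
      simp [vecMulVec_apply, mul_comm]
    · intro x hx
      simp only [star_trivial]
      rw [hquadM]
      have h1 : 0 < x ⬝ᵥ x := by
        rcases (dotProduct_self_nonneg' x).lt_or_eq with h | h
        · exact h
        · exact absurd ((dotProduct_self_eq_zero).mp h.symm) hx
      have h2 : 0 ≤ c * ∑ t, (ψ t ⬝ᵥ x)^2 :=
        mul_nonneg hc (Finset.sum_nonneg fun t _ => sq_nonneg _)
      nlinarith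
  have hdet : IsUnit M.det := isUnit_iff_ne_zero.mpr hMpd.det_pos.ne'
  set u : Fin d → ℝ := M⁻¹ *ᵥ v with hudef
  have hMu : M *ᵥ u = v := by
    rw [hudef, mulVec_mulVec, Matrix.mul_nonsing_inv _ hdet, one_mulVec]
  set q : ℝ := v ⬝ᵥ u with hqdef
  have hq1 : q = u ⬝ᵥ (M *ᵥ u) := by rw [hMu, dotProduct_comm]
  set B : ℝ := c * ∑ t, (ψ t ⬝ᵥ u)^2 with hBdef
  have hB0 : 0 ≤ B := mul_nonneg hc (Finset.sum_nonneg fun t _ => sq_nonneg _)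
  have hBq : B ≤ q := by
    rw [hq1, hquadM]
    nlinarith [dotProduct_self_nonneg' u]
  have hq0 : 0 ≤ q := le_trans hB0 hBq
  set S : ℝ := c * ∑ t, (a t)^2 with hSdef
  have hS0 : 0 ≤ S := mul_nonneg hc (Finset.sum_nonneg fun t _ => sq_nonneg _)
  -- Cauchy-Schwarz
  have hqform : q = c * ∑ t, a t * (ψ t ⬝ᵥ u) := by
    rw [hqdef, hvdef, smul_dotProduct, sum_dotProduct']
    simp only [smul_dotProduct]
    rfl
  have hCS : q ^ 2 ≤ S * B := by
    rw [hqform, hSdef, hBdef, mul_pow]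
    have := Finset.sum_mul_sq_le_sq_mul_sq Finset.univ a (fun t => ψ t ⬝ᵥ u)
    calc c^2 * (∑ t, a t * (ψ t ⬝ᵥ u))^2
        ≤ c^2 * ((∑ t, (a t)^2) * ∑ t, (ψ t ⬝ᵥ u)^2) := by
          exact mul_le_mul_of_nonneg_left this (sq_nonneg c)
      _ = c * (∑ t, (a t)^2) * (c * ∑ t, (ψ t ⬝ᵥ u)^2) := by ring
  have hqS : q ≤ S := by
    rcases hq0.lt_or_eq with h | h
    · have : q ^ 2 ≤ S * q := le_trans hCS (mul_le_mul_of_nonneg_left hBq hS0)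
      nlinarith
    · linarith
  -- conclude
  have : mnorm M⁻¹ v = Real.sqrt q := by rw [mnorm, hqdef, hudef]
  rw [this]
  exact Real.sqrt_le_sqrt (by rw [hSdef] at hqS ⊢; exact hqS)

lemma quad_form' {d n : ℕ} (δ : Fin n → Fin d → ℝ) (c : ℝ) (x : Fin d → ℝ) :
    x ⬝ᵥ ((c • ∑ t, vecMulVec (δ t) (δ t)) *ᵥ x) = c * ∑ t, (δ t ⬝ᵥ x)^2 := by
  rw [smul_mulVec, sum_mulVec']
  simp only [vecMulVec_mulVec']
  rw [dotProduct_smul, dotProduct_sum']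
  simp only [dotProduct_smul]
  congr 1
  refine Finset.sum_congr rfl fun t _ => ?_
  rw [dotProduct_comm x (δ t), sq]
  rfl


/-- deterministic inequality
`‖(1/T₁) Σ_t φ_{θ₀}(X_t) Δφ(X_t)ᵀ w*‖_{Σ̂_λ⁻¹} ≤ √d ‖w*‖_{Σ̂_δ}`. -/
theorem misspec_term_le_sqrt_d_mul_norm
    {d d0 : ℕ} {X : Type*}
    (φ : (Fin d0 → ℝ) → X → Fin d → ℝ)
    (wstar : Fin d → ℝ) (θstar θ0 : Fin d0 → ℝ)
    (T1 : ℕ) (hT1 : 0 < T1) (Xs : Fin T1 → X)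
    (lam : ℝ) (hlam : 0 < lam) :
    mnorm (((T1 : ℝ)⁻¹ • ∑ t : Fin T1,
        vecMulVec (φ θ0 (Xs t)) (φ θ0 (Xs t))) + lam • (1 : Matrix (Fin d) (Fin d) ℝ))⁻¹
      ((T1 : ℝ)⁻¹ • ∑ t : Fin T1, ((φ θstar (Xs t) - φ θ0 (Xs t)) ⬝ᵥ wstar) • φ θ0 (Xs t))
      ≤ Real.sqrt d *
        mnorm ((T1 : ℝ)⁻¹ • ∑ t : Fin T1,
          vecMulVec (φ θstar (Xs t) - φ θ0 (Xs t)) (φ θstar (Xs t) - φ θ0 (Xs t))) wstar := by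
  have key := key_lemma (fun t => φ θ0 (Xs t))
    (fun t => (φ θstar (Xs t) - φ θ0 (Xs t)) ⬝ᵥ wstar) ((T1 : ℝ)⁻¹) lam
    (inv_nonneg.mpr (Nat.cast_nonneg T1)) hlam
  have hR : mnorm ((T1 : ℝ)⁻¹ • ∑ t : Fin T1,
      vecMulVec (φ θstar (Xs t) - φ θ0 (Xs t)) (φ θstar (Xs t) - φ θ0 (Xs t))) wstar
      = Real.sqrt ((T1 : ℝ)⁻¹ * ∑ t : Fin T1, ((φ θstar (Xs t) - φ θ0 (Xs t)) ⬝ᵥ wstar)^2) := by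
    rw [mnorm, quad_form']
  rcases Nat.eq_zero_or_pos d with hd | hd
  · subst hd
    have hL : ∀ (M : Matrix (Fin 0) (Fin 0) ℝ) (v : Fin 0 → ℝ), mnorm M v = 0 := by
      intro M v
      simp [mnorm, dotProduct]
    rw [hL, hL]
    simp
  · rw [hR]
    refine le_trans key ?_
    have h1 : (1 : ℝ) ≤ Real.sqrt d := by
      rw [show (1:ℝ) = Real.sqrt 1 from (Real.sqrt_one).symm]
      exact Real.sqrt_le_sqrt (by exact_mod_cast hd)
    nlinarith [Real.sqrt_nonneg ((T1 : ℝ)⁻¹ * ∑ t : Fin T1, ((φ θstar (Xs t) - φ θ0 (Xs t)) ⬝ᵥ wstar)^2)]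
end
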